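/- Let r ≥ 2, n ≥ 2 and let α be a complex number such that α, 2α, ..., nα are all non-integers. Assuming the tensor decomposition rule V_β ⊗ V_α ≅ ⊕_{m=0}^{r-1} V_{β+α+(r-1)-2m} for generic β, the n-fold tensor power decomposes as V_α^{⊗n} ≅ ⊕_{m=0}^{(n-1)(r-1)} d_{n,m}^r · V_{nα+(n-1)(r-1)-2m}, where d_{n,m}^r = |E_{n,m}^r|. Formally: in the free ℤ-module on symbols [β] (β ∈ ℂ), define a bilinear product by [β]·[α] = Σ_{m=0}^{r-1} [β+α+(r-1)-2m]; then the n-th power of [α] equals Σ_{m=0}^{(n-1)(r-1)} d_{n,m}^r [nα+(n-1)(r-1)-2m]. -/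

import Mathlib

/-- `d_{n,m}^r` : the number of `(n-1)`-tuples of integers in `[0, r-1]` summing to `m`. -/
noncomputable def dcard (r n m : ℕ) : ℕ :=
  Nat.card {e : Fin (n - 1) → ℕ // (∀ i, e i ≤ r - 1) ∧ ∑ i, e i = m}

lemma dcard_eq_filter_card (r n m : ℕ) (hr : 1 ≤ r) :
    dcard r n m = ((Fintype.piFinset fun _ : Fin (n - 1) => Finset.range r).filter
      (fun e => ∑ i, e i = m)).card := by
  rw [dcard]
  have he : {e : Fin (n - 1) → ℕ // (∀ i, e i ≤ r - 1) ∧ ∑ i, e i = m} ≃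
      {e // e ∈ (Fintype.piFinset fun _ : Fin (n - 1) => Finset.range r).filter
        (fun e => ∑ i, e i = m)} := by
    apply Equiv.subtypeEquivRight
    intro e
    simp only [Finset.mem_filter, Fintype.mem_piFinset, Finset.mem_range]
    constructor
    · rintro ⟨h1, h2⟩
      exact ⟨fun i => Nat.lt_of_le_pred hr (h1 i), h2⟩
    · rintro ⟨h1, h2⟩
      exact ⟨fun i => Nat.le_pred_of_lt (h1 i), h2⟩
  rw [Nat.card_congr he, Nat.card_eq_fintype_card, Fintype.card_coe]

/-- Grothendieck-ring shadow of `V_α^{⊗n}`: in the free `ℤ`-module on symbols `[β]`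
(`β ∈ ℂ`) with product `[β]·[α] = Σ_{m<r} [β+α+(r-1)-2m]` (realized as
`x ·' y = x * y * T` in `AddMonoidAlgebra ℤ ℂ` with `T = Σ_{m<r} [(r-1)-2m]`),
the `n`-th power of `[α]` equals `Σ_m d_{n,m}^r [nα+(n-1)(r-1)-2m]`,
provided `α, 2α, …, nα` are all non-integers. -/
theorem tensor_power_decomposition (r n : ℕ) (hr : 2 ≤ r) (hn : 2 ≤ n) (α : ℂ)
    (hgen : ∀ k : ℕ, 1 ≤ k → k ≤ n → ∀ z : ℤ, (k : ℂ) * α ≠ (z : ℂ))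
    (T : AddMonoidAlgebra ℤ ℂ)
    (hT : T = ∑ m ∈ Finset.range r,
      AddMonoidAlgebra.single ((r : ℂ) - 1 - 2 * (m : ℂ)) (1 : ℤ))
    (f : ℕ → AddMonoidAlgebra ℤ ℂ)
    (hf1 : f 1 = AddMonoidAlgebra.single α (1 : ℤ))
    (hfs : ∀ k, 1 ≤ k → f (k + 1) = f k * AddMonoidAlgebra.single α (1 : ℤ) * T) :
    f n = ∑ m ∈ Finset.range ((n - 1) * (r - 1) + 1),
      (dcard r n m : ℤ) •
        AddMonoidAlgebra.single
          ((n : ℂ) * α + ((n : ℂ) - 1) * ((r : ℂ) - 1) - 2 * (m : ℂ)) (1 : ℤ) := by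
  -- Step 1 : `f k = single α ^ k * T ^ (k-1)` for all `k ≥ 1`.
  have key : ∀ k : ℕ, 1 ≤ k →
      f k = AddMonoidAlgebra.single α (1 : ℤ) ^ k * T ^ (k - 1) := by
    intro k hk
    induction k with
    | zero => omega
    | succ k ih =>
      rcases Nat.eq_or_lt_of_le hk with h1 | h1
      · simp [← h1, hf1]
      · have hk1 : 1 ≤ k := by omega
        rw [hfs k hk1, ih hk1, pow_succ]
        have : k + 1 - 1 = (k - 1) + 1 := by omega
        rw [this, pow_succ]
        ring
  rw [key n (by omega)]
  -- Step 2 : expand `T ^ (n-1)`.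
  set N := n - 1 with hN
  have hTN : T ^ N = ∑ e ∈ Fintype.piFinset (fun _ : Fin N => Finset.range r),
      AddMonoidAlgebra.single
        ((N : ℂ) * ((r : ℂ) - 1) - 2 * ((∑ i, e i : ℕ) : ℂ)) (1 : ℤ) := by
    have : T ^ N = ∏ _i : Fin N, T := by
      rw [Finset.prod_const, Finset.card_univ, Fintype.card_fin]
    rw [this, hT]
    rw [Finset.prod_univ_sum]
    refine Finset.sum_congr rfl fun e _ => ?_
    rw [AddMonoidAlgebra.prod_single]
    congr 1
    · push_cast
      rw [Finset.sum_sub_distrib, Finset.sum_const, Finset.card_univ, Fintype.card_fin,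
        ← Finset.mul_sum]
      push_cast
      ring
    · simp
  -- Step 3 : fiber the sum over the value of `∑ i, e i`.
  have hmaps : ∀ e ∈ Fintype.piFinset (fun _ : Fin N => Finset.range r),
      (∑ i, e i) ∈ Finset.range (N * (r - 1) + 1) := by
    intro e he
    simp only [Fintype.mem_piFinset, Finset.mem_range] at he ⊢
    have : ∑ i, e i ≤ ∑ _i : Fin N, (r - 1) :=
      Finset.sum_le_sum fun i _ => Nat.le_pred_of_lt (he i)
    simp only [Finset.sum_const, Finset.card_univ, Fintype.card_fin, smul_eq_mul] at this
    omega
  rw [hTN, ← Finset.sum_fiberwise_of_maps_to hmaps]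
  rw [Finset.mul_sum]
  refine Finset.sum_congr rfl fun m hm => ?_
  rw [Finset.mul_sum]
  have hsum : ∀ e ∈ (Fintype.piFinset fun _ : Fin N => Finset.range r).filter
      (fun e => ∑ i, e i = m),
      AddMonoidAlgebra.single α (1 : ℤ) ^ n *
        AddMonoidAlgebra.single
          ((N : ℂ) * ((r : ℂ) - 1) - 2 * ((∑ i, e i : ℕ) : ℂ)) (1 : ℤ) =
      AddMonoidAlgebra.single
          ((n : ℂ) * α + ((n : ℂ) - 1) * ((r : ℂ) - 1) - 2 * (m : ℂ)) (1 : ℤ) := by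
    intro e he
    rw [Finset.mem_filter] at he
    rw [he.2, AddMonoidAlgebra.single_pow, one_pow, AddMonoidAlgebra.single_mul_single,
      one_mul]
    congr 1
    have hNc : (N : ℂ) = (n : ℂ) - 1 := by
      rw [hN]; push_cast [Nat.cast_sub (by omega : 1 ≤ n)]; ring
    rw [hNc, nsmul_eq_mul]
    ring
  rw [Finset.sum_congr rfl hsum, Finset.sum_const,
    dcard_eq_filter_card r n m (by omega), ← hN]
  exact (natCast_zsmul _ _).symm
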